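/- Let c ∈ (−√2, √2) and κ > 0. There exists a constant C > 0, depending only on c and κ, such that for every continuously differentiable, bounded function w : ℝ → ℝ with ∫_ℝ (w')² < ∞ and satisfying the orthogonality condition ∫_ℝ w·Q_c² = 0, one has ∫_ℝ w(x)²·ρ(x)^κ dx ≤ C·∫_ℝ (w'(x))² dx, where ρ(x) = sech(x). -/

import Mathlib

open Real MeasureTheory

/-- The soliton profile `Q_c(x) = (β²/2) sech²(βx/2)` with `β = √(2 - c²)`. -/
noncomputable def Q (c x : ℝ) : ℝ :=
  (Real.sqrt (2 - c ^ 2)) ^ 2 / 2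
    * ((Real.cosh (Real.sqrt (2 - c ^ 2) * x / 2))⁻¹) ^ 2

/-- The weight `ρ(x) = sech x`. -/
noncomputable def rho (x : ℝ) : ℝ := (Real.cosh x)⁻¹

open Set Filter Topology in
lemma sech_le (x : ℝ) : (Real.cosh x)⁻¹ ≤ 2 * Real.exp (-|x|) := by
  have h1 : Real.exp |x| / 2 ≤ Real.cosh x := by
    rw [← Real.cosh_abs, Real.cosh_eq]
    have := Real.exp_pos (-|x|)
    linarith
  have h2 : (0:ℝ) < Real.exp |x| / 2 := by positivity
  calc (Real.cosh x)⁻¹ ≤ (Real.exp |x| / 2)⁻¹ := inv_anti₀ h2 h1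
    _ = 2 * Real.exp (-|x|) := by rw [Real.exp_neg]; field_simp

open Set Filter Topology in
lemma master {b : ℝ} (hb : 0 < b) :
    Integrable (fun x : ℝ => (1 + |x|) ^ 2 * Real.exp (-b * |x|)) := by
  have hIoi : IntegrableOn (fun x : ℝ => (1 + |x|) ^ 2 * Real.exp (-b * |x|)) (Ioi 0) := by
    have hO : (fun x : ℝ => (1 + x) ^ 2 * Real.exp (-b * x)) =O[atTop]
        fun x => Real.exp (-(b/2) * x) := by
      have t1 : Tendsto (fun y : ℝ => y ^ (2:ℝ) * Real.exp (-(b/2) * y)) atTop (𝓝 0) :=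
        tendsto_rpow_mul_exp_neg_mul_atTop_nhds_zero 2 (b/2) (by linarith)
      simp only [show ((2:ℝ)) = ((2:ℕ):ℝ) from by norm_num, Real.rpow_natCast] at t1
      have t2 := t1.comp (tendsto_atTop_add_const_left atTop 1 tendsto_id)
      have h3 := t2.const_mul (Real.exp (b/2))
      rw [mul_zero] at h3
      have ht : Tendsto (fun x : ℝ => (1 + x) ^ 2 * Real.exp (-(b/2) * x)) atTop (𝓝 0) := by
        refine Filter.Tendsto.congr (fun x => ?_) h3
        simp only [Function.comp, id]
        rw [← mul_assoc, mul_comm (Real.exp (b/2)), mul_assoc, ← Real.exp_add]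
        congr 2
        ring
      have hbound : (fun x : ℝ => (1 + x) ^ 2 * Real.exp (-(b/2) * x)) =O[atTop]
          (fun _ => (1:ℝ)) := ht.isBigO_one ℝ
      calc (fun x : ℝ => (1 + x) ^ 2 * Real.exp (-b * x))
          = fun x => ((1 + x) ^ 2 * Real.exp (-(b/2) * x)) * Real.exp (-(b/2) * x) := by
            funext x
            rw [mul_assoc, ← Real.exp_add]
            congr 2
            ring
        _ =O[atTop] fun x => 1 * Real.exp (-(b/2) * x) :=
            hbound.mul (Asymptotics.isBigO_refl _ _)
        _ = fun x => Real.exp (-(b/2) * x) := by funext x; ring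
    have h := integrable_of_isBigO_exp_neg (by linarith : (0:ℝ) < b/2)
      (by fun_prop : ContinuousOn (fun x : ℝ => (1 + x) ^ 2 * Real.exp (-b * x)) (Ici 0)) hO
    apply h.congr_fun ?_ measurableSet_Ioi
    intro x hx
    simp only [abs_of_pos (show (0:ℝ) < x from hx)]
  have hIic : IntegrableOn (fun x : ℝ => (1 + |x|) ^ 2 * Real.exp (-b * |x|)) (Iic 0) := by
    rw [← Measure.map_neg_eq_self (volume : Measure ℝ)]
    have m : MeasurableEmbedding fun x : ℝ => -x := (Homeomorph.neg ℝ).measurableEmbedding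
    rw [m.integrableOn_map_iff]
    simp_rw [Function.comp_def, abs_neg, neg_preimage, neg_Iic, neg_zero]
    exact Iff.mpr integrableOn_Ici_iff_integrableOn_Ioi hIoi
  have h2 : IntegrableOn (fun x : ℝ => (1 + |x|) ^ 2 * Real.exp (-b * |x|)) (Iic 0 ∪ Ioi 0) :=
    hIic.union hIoi
  rwa [Iic_union_Ioi, integrableOn_univ] at h2

open Set Filter Topology in
lemma key_pointwise {w : ℝ → ℝ} (hw : ContDiff ℝ 1 w)
    (hD : Integrable (fun x => (deriv w x) ^ 2)) (x : ℝ) :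
    |w x - w 0| ≤ Real.sqrt (∫ t, (deriv w t) ^ 2) / 2 * (1 + |x|) := by
  set D := ∫ t, (deriv w t) ^ 2 with hDdef
  have hDnn : 0 ≤ D := integral_nonneg fun t => sq_nonneg _
  have hg : Continuous (deriv w) := hw.continuous_deriv le_rfl
  rcases eq_or_lt_of_le hDnn with hD0 | hDpos
  · have hae : (fun t => (deriv w t) ^ 2) =ᵐ[volume] 0 :=
      (integral_eq_zero_iff_of_nonneg (fun t => sq_nonneg _) hD).mp hD0.symm
    have hzero : ∀ t, deriv w t = 0 := by
      have heq : (fun t => (deriv w t) ^ 2) = 0 :=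
        (Continuous.ae_eq_iff_eq volume (by fun_prop) continuous_const).mp hae
      intro t
      have := congrFun heq t
      simpa using this
    have hconst : w x = w 0 :=
      is_const_of_deriv_eq_zero (hw.differentiable one_ne_zero) hzero x 0
    rw [hconst, sub_self, abs_zero]
    positivity
  · set s := Real.sqrt D with hsdef
    have hsD : 0 < s := Real.sqrt_pos.mpr hDpos
    have hss : s * s = D := Real.mul_self_sqrt hDnn
    have ftc : ∫ t in (0:ℝ)..x, deriv w t = w x - w 0 :=
      intervalIntegral.integral_deriv_eq_sub
        (fun t _ => (hw.differentiable one_ne_zero).differentiableAt)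
        (hg.intervalIntegrable 0 x)
    rw [← ftc, intervalIntegral.intervalIntegral_eq_integral_uIoc]
    set S := Set.uIoc (0:ℝ) x with hS
    have habs : |(if (0:ℝ) ≤ x then (1:ℝ) else -1) • ∫ t in S, deriv w t|
        = |∫ t in S, deriv w t| := by split_ifs <;> simp
    rw [habs]
    have hvolS : volume S = ENNReal.ofReal |x| := by
      rw [hS, Set.uIoc, Real.volume_Ioc]
      rcases le_total 0 x with h | h
      · rw [min_eq_left h, max_eq_right h, abs_of_nonneg h, sub_zero]
      · rw [min_eq_right h, max_eq_left h, abs_of_nonpos h, zero_sub]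
    have hvolS' : volume S < ⊤ := by rw [hvolS]; exact ENNReal.ofReal_lt_top
    have hint1 : IntegrableOn (fun t => |deriv w t|) S :=
      Continuous.integrableOn_uIoc (by fun_prop)
    have hint2a : IntegrableOn (fun t => (deriv w t) ^ 2 * (2 * s)⁻¹) S :=
      Continuous.integrableOn_uIoc (by fun_prop)
    have hint2b : IntegrableOn (fun _ : ℝ => s / 2) S :=
      Iff.mpr integrableOn_const_iff (Or.inr hvolS')
    have hint2 : IntegrableOn (fun t => (deriv w t) ^ 2 * (2 * s)⁻¹ + s / 2) S :=
      hint2a.add hint2b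
    have hDval : D * (2 * s)⁻¹ = s / 2 := by
      field_simp
      nlinarith [hss]
    calc |∫ t in S, deriv w t| ≤ ∫ t in S, |deriv w t| := by
          simpa using MeasureTheory.norm_integral_le_integral_norm
            (μ := volume.restrict S) (fun t => deriv w t)
      _ ≤ ∫ t in S, ((deriv w t) ^ 2 * (2 * s)⁻¹ + s / 2) := by
          apply setIntegral_mono_on hint1 hint2 measurableSet_uIoc
          intro t _
          rw [show (deriv w t) ^ 2 * (2 * s)⁻¹ + s / 2
              = ((deriv w t) ^ 2 + s * s) / (2 * s) by field_simp]
          rw [le_div_iff₀ (by positivity)]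
          nlinarith [sq_nonneg (|deriv w t| - s), sq_abs (deriv w t)]
      _ = (∫ t in S, (deriv w t) ^ 2) * (2 * s)⁻¹ + (volume S).toReal * (s / 2) := by
          rw [integral_add hint2a hint2b, integral_mul_const, setIntegral_const, smul_eq_mul, measureReal_def]
      _ ≤ D * (2 * s)⁻¹ + |x| * (s / 2) := by
          have hle : (∫ t in S, (deriv w t) ^ 2) ≤ D :=
            setIntegral_le_integral hD (Filter.Eventually.of_forall fun t => sq_nonneg _)
          have hvr : (volume S).toReal = |x| := by
            rw [hvolS, ENNReal.toReal_ofReal (abs_nonneg x)]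
          rw [hvr]
          gcongr
      _ = s / 2 * (1 + |x|) := by rw [hDval]; ring

/-- Poincaré-type inequality: if `∫ w Q_c² = 0` then
`∫ w² ρ^κ ≲ ∫ (w')²`. -/
theorem poincare_orthogonal (c : ℝ)
    (hc : c ∈ Set.Ioo (-Real.sqrt 2) (Real.sqrt 2)) (κ : ℝ) (hκ : 0 < κ) :
    ∃ C > 0, ∀ w : ℝ → ℝ, ContDiff ℝ 1 w → (∃ M, ∀ x, |w x| ≤ M) →
      Integrable (fun x => (deriv w x) ^ 2) →
      (∫ x, w x * (Q c x) ^ 2) = 0 →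
      (∫ x, w x ^ 2 * rho x ^ κ) ≤ C * ∫ x, (deriv w x) ^ 2 := by
  classical
  -- basic facts about β
  set β := Real.sqrt (2 - c ^ 2) with hβdef
  have hc2 : c ^ 2 < 2 := by
    have h := sq_lt_sq' hc.1 hc.2
    rwa [Real.sq_sqrt (by norm_num : (0:ℝ) ≤ 2)] at h
  have hβpos : 0 < β := Real.sqrt_pos.mpr (by linarith)
  have hβsq : β ^ 2 = 2 - c ^ 2 := Real.sq_sqrt (by linarith)
  -- continuity facts
  have hQcont : Continuous fun x => Q c x := by
    unfold Q
    apply Continuous.mul continuous_const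
    exact ((Real.continuous_cosh.comp (by fun_prop)).inv₀
      (fun x => (Real.cosh_pos _).ne')).pow 2
  have hρcont : Continuous fun x => rho x ^ κ := by
    unfold rho
    exact (Real.continuous_cosh.inv₀ fun x => (Real.cosh_pos x).ne').rpow_const
      (fun x => Or.inr hκ.le)
  have hρnn : ∀ x, 0 ≤ rho x ^ κ := fun x =>
    Real.rpow_nonneg (by unfold rho; positivity) κ
  have habscont : Continuous fun x : ℝ => 1 + |x| := continuous_const.add continuous_abs
  have hQpos : ∀ x, 0 < Q c x := by
    intro x
    unfold Q
    rw [← hβdef]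
    have := Real.cosh_pos (β * x / 2)
    positivity
  -- pointwise bounds
  have hQb : ∀ x, Q c x ≤ 2 * β ^ 2 * Real.exp (-β * |x|) := by
    intro x
    unfold Q
    rw [← hβdef]
    have h1 := sech_le (β * x / 2)
    have h2 : ((Real.cosh (β * x / 2))⁻¹) ^ 2 ≤ (2 * Real.exp (-|β * x / 2|)) ^ 2 := by
      apply pow_le_pow_left₀ (by positivity) h1
    have h3 : |β * x / 2| = β * |x| / 2 := by
      rw [abs_div, abs_mul, abs_of_pos hβpos]
      norm_num
    calc β ^ 2 / 2 * ((Real.cosh (β * x / 2))⁻¹) ^ 2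
        ≤ β ^ 2 / 2 * (2 * Real.exp (-|β * x / 2|)) ^ 2 := by
          apply mul_le_mul_of_nonneg_left h2 (by positivity)
      _ = 2 * β ^ 2 * Real.exp (-β * |x|) := by
          rw [mul_pow, sq (Real.exp _), ← Real.exp_add, h3]
          ring_nf
  have hQ2b : ∀ x, Q c x ^ 2 ≤ 4 * β ^ 4 * Real.exp (-(2 * β) * |x|) := by
    intro x
    have h1 : Q c x ^ 2 ≤ (2 * β ^ 2 * Real.exp (-β * |x|)) ^ 2 :=
      pow_le_pow_left₀ (hQpos x).le (hQb x) 2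
    calc Q c x ^ 2 ≤ (2 * β ^ 2 * Real.exp (-β * |x|)) ^ 2 := h1
      _ = 4 * β ^ 4 * Real.exp (-(2 * β) * |x|) := by
          rw [mul_pow, mul_pow, sq (Real.exp _), ← Real.exp_add]
          ring_nf
  have hρb : ∀ x, rho x ^ κ ≤ 2 ^ κ * Real.exp (-κ * |x|) := by
    intro x
    have h1 : rho x ≤ 2 * Real.exp (-|x|) := sech_le x
    have h0 : 0 ≤ rho x := by unfold rho; positivity
    calc rho x ^ κ ≤ (2 * Real.exp (-|x|)) ^ κ :=
          Real.rpow_le_rpow h0 h1 hκ.le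
      _ = 2 ^ κ * Real.exp (-κ * |x|) := by
          rw [Real.mul_rpow (by norm_num) (Real.exp_pos _).le,
            Real.rpow_def_of_pos (Real.exp_pos _), Real.log_exp]
          ring_nf
  have hone_le : ∀ x : ℝ, (1:ℝ) ≤ (1 + |x|) ^ 2 := by
    intro x
    nlinarith [abs_nonneg x]
  have hone_le' : ∀ x : ℝ, (1:ℝ) + |x| ≤ (1 + |x|) ^ 2 := by
    intro x
    nlinarith [abs_nonneg x]
  -- integrability
  have hmQ := master (show (0:ℝ) < 2 * β by positivity)
  have hmρ := master hκ
  have hQ2int : Integrable fun x => Q c x ^ 2 := by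
    apply Integrable.mono' (hmQ.const_mul (4 * β ^ 4)) (hQcont.pow 2).aestronglyMeasurable
    filter_upwards with x
    rw [Real.norm_eq_abs, abs_of_nonneg (sq_nonneg _)]
    calc Q c x ^ 2 ≤ 4 * β ^ 4 * Real.exp (-(2 * β) * |x|) := hQ2b x
      _ = 4 * β ^ 4 * (1 * Real.exp (-(2 * β) * |x|)) := by ring
      _ ≤ 4 * β ^ 4 * ((1 + |x|) ^ 2 * Real.exp (-(2 * β) * |x|)) := by
          gcongr
          exact hone_le x
  have hI1int : Integrable fun x => (1 + |x|) * Q c x ^ 2 := by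
    apply Integrable.mono' (hmQ.const_mul (4 * β ^ 4))
      (habscont.mul (hQcont.pow 2)).aestronglyMeasurable
    filter_upwards with x
    simp only [Pi.mul_apply, Pi.pow_apply]
    have h0 : 0 ≤ (1 + |x|) * Q c x ^ 2 := by positivity
    rw [Real.norm_eq_abs, abs_of_nonneg h0]
    calc (1 + |x|) * Q c x ^ 2
        ≤ (1 + |x|) ^ 2 * (4 * β ^ 4 * Real.exp (-(2 * β) * |x|)) := by
          apply mul_le_mul (hone_le' x) (hQ2b x) (sq_nonneg _) (by positivity)
      _ = 4 * β ^ 4 * ((1 + |x|) ^ 2 * Real.exp (-(2 * β) * |x|)) := by ring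
  have hρint : Integrable fun x => rho x ^ κ := by
    apply Integrable.mono' (hmρ.const_mul (2 ^ κ)) hρcont.aestronglyMeasurable
    filter_upwards with x
    rw [Real.norm_eq_abs, abs_of_nonneg (hρnn x)]
    calc rho x ^ κ ≤ 2 ^ κ * Real.exp (-κ * |x|) := hρb x
      _ = 2 ^ κ * (1 * Real.exp (-κ * |x|)) := by ring
      _ ≤ 2 ^ κ * ((1 + |x|) ^ 2 * Real.exp (-κ * |x|)) := by
          gcongr
          exact hone_le x
  have hJ2int : Integrable fun x => (1 + |x|) ^ 2 * rho x ^ κ := by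
    apply Integrable.mono' (hmρ.const_mul (2 ^ κ))
      ((habscont.pow 2).mul hρcont).aestronglyMeasurable
    filter_upwards with x
    simp only [Pi.mul_apply, Pi.pow_apply]
    have h0 : 0 ≤ (1 + |x|) ^ 2 * rho x ^ κ := mul_nonneg (sq_nonneg _) (hρnn x)
    rw [Real.norm_eq_abs, abs_of_nonneg h0]
    calc (1 + |x|) ^ 2 * rho x ^ κ
        ≤ (1 + |x|) ^ 2 * (2 ^ κ * Real.exp (-κ * |x|)) :=
          mul_le_mul_of_nonneg_left (hρb x) (by positivity)
      _ = 2 ^ κ * ((1 + |x|) ^ 2 * Real.exp (-κ * |x|)) := by ring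
  -- the constants
  set I₀ := ∫ x, Q c x ^ 2 with hI₀
  set I₁ := ∫ x, (1 + |x|) * Q c x ^ 2 with hI₁
  set J₀ := ∫ x, rho x ^ κ with hJ₀
  set J₂ := ∫ x, (1 + |x|) ^ 2 * rho x ^ κ with hJ₂
  have hI₀pos : 0 < I₀ := by
    rw [hI₀]
    rw [MeasureTheory.integral_pos_iff_support_of_nonneg (fun x => sq_nonneg _) hQ2int]
    have hsupp : (Function.support fun x => Q c x ^ 2) = Set.univ :=
      Set.eq_univ_of_forall fun x => (pow_pos (hQpos x) 2).ne'
    rw [hsupp, Real.volume_univ]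
    exact ENNReal.zero_lt_top
  have hI₁nn : 0 ≤ I₁ := integral_nonneg fun x => by positivity
  have hJ₀nn : 0 ≤ J₀ := integral_nonneg fun x => hρnn x
  clear_value I₀ I₁ J₀
  have hJ₂nn : 0 ≤ J₂ := integral_nonneg fun x => mul_nonneg (sq_nonneg _) (hρnn x)
  clear_value J₂
  refine ⟨I₁ ^ 2 * J₀ / (2 * I₀ ^ 2) + J₂ / 2 + 1, by positivity, ?_⟩
  intro w hw hM hD ho
  obtain ⟨M, hM⟩ := hM
  have hM0 : 0 ≤ M := le_trans (abs_nonneg _) (hM 0)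
  have hwcont : Continuous w := hw.continuous
  set D := ∫ x, (deriv w x) ^ 2 with hDdef
  have hDnn : 0 ≤ D := integral_nonneg fun t => sq_nonneg _
  set s := Real.sqrt D with hsdef
  have hsnn : 0 ≤ s := Real.sqrt_nonneg D
  have hss : s * s = D := Real.mul_self_sqrt hDnn
  have key : ∀ x, |w x - w 0| ≤ s / 2 * (1 + |x|) := by
    intro x
    rw [hsdef, hDdef]
    exact key_pointwise hw hD x
  clear_value D s
  -- integrability of w-related products
  have hwQ : Integrable fun x => w x * Q c x ^ 2 := by
    apply Integrable.mono' (hQ2int.const_mul M) (hwcont.mul (hQcont.pow 2)).aestronglyMeasurable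
    filter_upwards with x
    simp only [Pi.mul_apply, Pi.pow_apply]
    rw [Real.norm_eq_abs, abs_mul, abs_of_nonneg (sq_nonneg (Q c x))]
    exact mul_le_mul_of_nonneg_right (hM x) (sq_nonneg _)
  have hsub : Integrable fun x => (w x - w 0) * Q c x ^ 2 := by
    have heq : (fun x => (w x - w 0) * Q c x ^ 2)
        = fun x => w x * Q c x ^ 2 - w 0 * Q c x ^ 2 := by
      funext x; ring
    rw [heq]
    exact hwQ.sub (hQ2int.const_mul (w 0))
  -- orthogonality gives bound on w 0
  have hw0 : |w 0| * I₀ ≤ s / 2 * I₁ := by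
    have hsplit : ∫ x, (w x - w 0) * Q c x ^ 2 = -(w 0 * I₀) := by
      have heq : (fun x => (w x - w 0) * Q c x ^ 2)
          = fun x => w x * Q c x ^ 2 - w 0 * Q c x ^ 2 := by
        funext x; ring
      rw [heq, integral_sub hwQ (hQ2int.const_mul (w 0)), ho,
        MeasureTheory.integral_const_mul, zero_sub, hI₀]
    have h1 : |w 0| * I₀ = |∫ x, (w x - w 0) * Q c x ^ 2| := by
      rw [hsplit, abs_neg, abs_mul, abs_of_nonneg hI₀pos.le]
    rw [h1]
    calc |∫ x, (w x - w 0) * Q c x ^ 2| ≤ ∫ x, |(w x - w 0) * Q c x ^ 2| := by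
          simpa only [Real.norm_eq_abs] using MeasureTheory.norm_integral_le_integral_norm
            (μ := volume) (fun x => (w x - w 0) * Q c x ^ 2)
      _ ≤ ∫ x, s / 2 * ((1 + |x|) * Q c x ^ 2) := by
          apply integral_mono hsub.abs (hI1int.const_mul (s / 2))
          intro x
          show |(w x - w 0) * Q c x ^ 2| ≤ s / 2 * ((1 + |x|) * Q c x ^ 2)
          rw [abs_mul, abs_of_nonneg (sq_nonneg (Q c x))]
          calc |w x - w 0| * Q c x ^ 2 ≤ s / 2 * (1 + |x|) * Q c x ^ 2 :=
                mul_le_mul_of_nonneg_right (key x) (sq_nonneg _)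
            _ = s / 2 * ((1 + |x|) * Q c x ^ 2) := by ring
      _ = s / 2 * I₁ := by rw [MeasureTheory.integral_const_mul, hI₁]
  have hw0sq : (w 0) ^ 2 * I₀ ^ 2 ≤ D / 4 * I₁ ^ 2 := by
    have h2 := mul_self_le_mul_self (by positivity) hw0
    have e1 : |w 0| * I₀ * (|w 0| * I₀) = (w 0) ^ 2 * I₀ ^ 2 := by
      rw [show (w 0) ^ 2 = |w 0| ^ 2 from (sq_abs _).symm]; ring
    have e2 : s / 2 * I₁ * (s / 2 * I₁) = D / 4 * I₁ ^ 2 := by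
      rw [← hss]; ring
    linarith
  -- the main estimate
  have hL : Integrable fun x => w x ^ 2 * rho x ^ κ := by
    apply Integrable.mono' (hρint.const_mul (M ^ 2))
      ((hwcont.pow 2).mul hρcont).aestronglyMeasurable
    filter_upwards with x
    simp only [Pi.mul_apply, Pi.pow_apply]
    have h0 : 0 ≤ w x ^ 2 * rho x ^ κ := mul_nonneg (sq_nonneg _) (hρnn x)
    rw [Real.norm_eq_abs, abs_of_nonneg h0]
    apply mul_le_mul_of_nonneg_right ?_ (hρnn x)
    calc w x ^ 2 = |w x| ^ 2 := (sq_abs _).symm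
      _ ≤ M ^ 2 := pow_le_pow_left₀ (abs_nonneg _) (hM x) 2
  have hptwise : ∀ x, w x ^ 2 * rho x ^ κ
      ≤ 2 * (w 0) ^ 2 * rho x ^ κ + D / 2 * ((1 + |x|) ^ 2 * rho x ^ κ) := by
    intro x
    have h1 : |w x| ≤ |w 0| + s / 2 * (1 + |x|) := by
      calc |w x| = |w 0 + (w x - w 0)| := by ring_nf
        _ ≤ |w 0| + |w x - w 0| := abs_add_le _ _
        _ ≤ |w 0| + s / 2 * (1 + |x|) := by linarith [key x]
    have h2 : w x ^ 2 ≤ 2 * (w 0) ^ 2 + D / 2 * (1 + |x|) ^ 2 := by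
      have h3 : |w x| ^ 2 ≤ (|w 0| + s / 2 * (1 + |x|)) ^ 2 :=
        pow_le_pow_left₀ (abs_nonneg _) h1 2
      rw [sq_abs] at h3
      have h4 : (|w 0| + s / 2 * (1 + |x|)) ^ 2
          ≤ 2 * |w 0| ^ 2 + 2 * (s / 2 * (1 + |x|)) ^ 2 := by
        have h7 := sq_nonneg (|w 0| - s / 2 * (1 + |x|))
        ring_nf at h7 ⊢
        linarith [h7]
      have h5 : 2 * (s / 2 * (1 + |x|)) ^ 2 = D / 2 * (1 + |x|) ^ 2 := by
        rw [← hss]; ring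
      have h6 : |w 0| ^ 2 = (w 0) ^ 2 := sq_abs _
      linarith
    calc w x ^ 2 * rho x ^ κ
        ≤ (2 * (w 0) ^ 2 + D / 2 * (1 + |x|) ^ 2) * rho x ^ κ :=
          mul_le_mul_of_nonneg_right h2 (hρnn x)
      _ = 2 * (w 0) ^ 2 * rho x ^ κ + D / 2 * ((1 + |x|) ^ 2 * rho x ^ κ) := by ring
  have hterm : 2 * (w 0) ^ 2 * J₀ ≤ I₁ ^ 2 * J₀ / (2 * I₀ ^ 2) * D := by
    rw [div_mul_eq_mul_div, le_div_iff₀ (by positivity)]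
    have h8 := mul_le_mul_of_nonneg_left hw0sq hJ₀nn
    ring_nf at h8 ⊢
    linarith [h8]
  calc (∫ x, w x ^ 2 * rho x ^ κ)
      ≤ ∫ x, (2 * (w 0) ^ 2 * rho x ^ κ + D / 2 * ((1 + |x|) ^ 2 * rho x ^ κ)) := by
        apply integral_mono hL ((hρint.const_mul _).add (hJ2int.const_mul _)) hptwise
    _ = 2 * (w 0) ^ 2 * J₀ + D / 2 * J₂ := by
        rw [integral_add (hρint.const_mul _) (hJ2int.const_mul _),
          MeasureTheory.integral_const_mul, MeasureTheory.integral_const_mul, hJ₀, hJ₂]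
    _ ≤ (I₁ ^ 2 * J₀ / (2 * I₀ ^ 2) + J₂ / 2 + 1) * D := by
        linarith [hterm, hDnn, hJ₂nn]
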